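/- Let S̃ = (1/3)·[[1,−2,−2],[−2,−2,1],[−2,1,−2]] and let T̃ = diag(d₀, d₁, d₂) be a diagonal 3×3 complex matrix whose diagonal entries d₀, d₁, d₂ are roots of unity and are not all equal. If the matrix S̃·T̃ has finite order (there exists n ≥ 1 with (S̃·T̃)ⁿ = 𝟙), then there exists a root of unity η such that either (d₀, d₁, d₂) = (η, η·ω, η·ω²) or (d₀, d₁, d₂) = (η, η·ω², η·ω), where ω = e^{2πi/3}. -/

import Mathlib

/-- `ω = e^{2πi/3}`. -/
noncomputable def ω : ℂ := Complex.exp (2 * Real.pi * Complex.I / 3)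

/-- `S̃ = (1/3)·[[1,−2,−2],[−2,−2,1],[−2,1,−2]] = 2u₁u₁† − 𝟙` for
`u₁ = (2,−1,−1)ᵀ/√6`. -/
noncomputable def Stilde : Matrix (Fin 3) (Fin 3) ℂ :=
  ((1 : ℂ) / 3) • !![1, -2, -2; -2, -2, 1; -2, 1, -2]

open Polynomial Matrix


lemma ru_integral {z : ℂ} {n : ℕ} (hn : 0 < n) (h : z ^ n = 1) : IsIntegral ℤ z := by
  refine ⟨X ^ n - 1, ?_, ?_⟩
  · simpa using monic_X_pow_sub_C (1 : ℤ) hn.ne'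
  · simp [eval₂, h]

lemma eig_ru {A : Matrix (Fin 3) (Fin 3) ℂ} {n : ℕ} (hn : 1 ≤ n) (hA : A ^ n = 1)
    {μ : ℂ} (hμ : μ ∈ A.charpoly.roots) : μ ^ n = 1 := by
  have hroot : A.charpoly.eval μ = 0 :=
    (mem_roots (p := A.charpoly) (Matrix.charpoly_monic A).ne_zero).1 hμ
  have hdet : (Matrix.scalar (Fin 3) μ - A).det = 0 := by
    have := _root_.eval_det (charmatrix A) μ
    rw [← Matrix.charpoly, matPolyEquiv_charmatrix] at this
    simpa using this.symm.trans (by rw [hroot])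
  obtain ⟨v, hv0, hv⟩ := (Matrix.exists_mulVec_eq_zero_iff.2 hdet)
  have hAv : A.mulVec v = μ • v := by
    have h1 : (Matrix.scalar (Fin 3) μ).mulVec v - A.mulVec v = 0 := by
      rw [← Matrix.sub_mulVec, hv]
    have h2 : (Matrix.scalar (Fin 3) μ).mulVec v = μ • v := by
      ext i; simp [Matrix.mulVec_diagonal, Algebra.algebraMap_eq_smul_one]
    rw [h2, sub_eq_zero] at h1
    exact h1.symm
  have key : ∀ k : ℕ, (A ^ k).mulVec v = μ ^ k • v := by
    intro k
    induction k with
    | zero => simp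
    | succ k ih =>
      rw [pow_succ', ← Matrix.mulVec_mulVec, ih, Matrix.mulVec_smul, hAv,
        smul_smul, pow_succ']
      ring_nf
  have hfin := key n
  rw [hA, Matrix.one_mulVec] at hfin
  obtain ⟨j, hj⟩ := Function.ne_iff.1 hv0
  have : v j = μ ^ n * v j := congrFun hfin j
  have := mul_right_cancel₀ (by simpa using hj) (this.symm.trans (one_mul (v j)).symm)
  simpa using this

lemma trace_integral {A : Matrix (Fin 3) (Fin 3) ℂ} {n : ℕ} (hn : 1 ≤ n) (hA : A ^ n = 1) :
    IsIntegral ℤ A.trace := by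
  rw [Matrix.trace_eq_sum_roots_charpoly]
  have : ∀ μ ∈ A.charpoly.roots, μ ∈ integralClosure ℤ ℂ := fun μ hμ =>
    ru_integral hn (eig_ru hn hA hμ)
  exact Subalgebra.multiset_sum_mem (S := integralClosure ℤ ℂ) this

/-- A root of unity congruent to 1 mod 3 equals 1. -/
lemma ru_cong_one {ζ : ℂ} (hru : ∃ m : ℕ, 0 < m ∧ ζ ^ m = 1)
    (h3 : ∃ r : ℂ, IsIntegral ℤ r ∧ ζ - 1 = 3 * r) : ζ = 1 := by
  obtain ⟨m, hm, hζm⟩ := hru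
  obtain ⟨r, hr, hr3⟩ := h3
  -- k = exact order of ζ
  have hfo : IsOfFinOrder ζ := isOfFinOrder_iff_pow_eq_one.2 ⟨m, hm, hζm⟩
  set k := orderOf ζ with hk
  have hprim : IsPrimitiveRoot ζ k := IsPrimitiveRoot.orderOf ζ
  have hkpos : 0 < k := hfo.orderOf_pos
  by_contra hζ1
  have hk1 : k ≠ 1 := by
    intro h; rw [h] at hprim; exact hζ1 (by simpa using hprim.pow_eq_one)
  have hk2 : 2 ≤ k := by omega
  haveI : NeZero k := ⟨hkpos.ne'⟩
  have hζint : IsIntegral ℤ ζ := ru_integral hkpos hprim.pow_eq_one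
  -- each 1 - μ for μ primitive k-th root is 3 * (integral)
  have key : ∀ μ ∈ primitiveRoots k ℂ, ∃ s : ℂ, IsIntegral ℤ s ∧ 1 - μ = 3 * s := by
    intro μ hμ
    have hμk : μ ^ k = 1 := ((mem_primitiveRoots hkpos).1 hμ).pow_eq_one
    obtain ⟨j, hjk, hj⟩ := hprim.eq_pow_of_pow_eq_one hμk
    refine ⟨(-r) * (∑ i ∈ Finset.range j, ζ ^ i), ?_, ?_⟩
    · exact (hr.neg).mul (IsIntegral.sum _ fun i _ => hζint.pow i)
    · have hgeom : (∑ i ∈ Finset.range j, ζ ^ i) * (ζ - 1) = ζ ^ j - 1 := geom_sum_mul ζ j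
      rw [← hj]
      have : 1 - ζ ^ j = -(ζ ^ j - 1) := by ring
      rw [this, ← hgeom, hr3]; ring
  -- product over all primitive roots
  have hprod : (((cyclotomic k ℤ).eval 1 : ℤ) : ℂ) = ∏ μ ∈ primitiveRoots k ℂ, (1 - μ) := by
    have hcyc : cyclotomic k ℂ = ∏ μ ∈ primitiveRoots k ℂ, (X - C μ) :=
      cyclotomic_eq_prod_X_sub_primitiveRoots hprim
    have : (((cyclotomic k ℤ).eval 1 : ℤ) : ℂ) = (cyclotomic k ℂ).eval 1 := by
      rw [← map_cyclotomic k (Int.castRingHom ℂ), eval_map, eval₂_at_one]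
      simp
    rw [this, hcyc]
    simp [eval_prod]
  -- extract all the s's
  choose s hs1 hs2 using key
  have hcard : (primitiveRoots k ℂ).card = Nat.totient k := Complex.card_primitiveRoots k
  have hprod2 : (((cyclotomic k ℤ).eval 1 : ℤ) : ℂ)
      = 3 ^ (Nat.totient k) * ∏ μ ∈ (primitiveRoots k ℂ).attach, s μ.1 μ.2 := by
    rw [hprod, ← Finset.prod_attach (f := fun μ => (1:ℂ) - μ)]
    rw [Finset.prod_congr rfl (fun μ _ => hs2 μ.1 μ.2)]
    rw [Finset.prod_mul_distrib, Finset.prod_const, Finset.card_attach, hcard]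
  set c : ℤ := (cyclotomic k ℤ).eval 1 with hc
  set T : ℂ := ∏ μ ∈ (primitiveRoots k ℂ).attach, s μ.1 μ.2 with hT
  have hTint : IsIntegral ℤ T :=
    Subalgebra.prod_mem (integralClosure ℤ ℂ) (fun μ _ => hs1 μ.1 μ.2)
  -- T is rational, hence an integer; deduce 3^φ(k) ∣ c
  have h3ne : ((3:ℂ) ^ Nat.totient k) ≠ 0 := pow_ne_zero _ (by norm_num)
  have hq : algebraMap ℚ ℂ ((c : ℚ) / 3 ^ Nat.totient k) = T := by
    have hmap : algebraMap ℚ ℂ ((c : ℚ) / 3 ^ Nat.totient k)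
        = (c : ℂ) / 3 ^ Nat.totient k := by
      rw [map_div₀]
      push_cast
      norm_num
    rw [hmap, hprod2, mul_comm, mul_div_assoc, div_self h3ne, mul_one]
  have hqint : IsIntegral ℤ ((c : ℚ) / 3 ^ Nat.totient k) := by
    rw [← isIntegral_algebraMap_iff (algebraMap ℚ ℂ).injective, hq]; exact hTint
  obtain ⟨y, hy⟩ := IsIntegrallyClosed.isIntegral_iff.1 hqint
  have hdvd : (3:ℤ) ^ Nat.totient k ∣ c := by
    refine ⟨y, ?_⟩
    have h2 : (c : ℚ) = 3 ^ Nat.totient k * y := by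
      have h3q : ((3:ℚ) ^ Nat.totient k) ≠ 0 := by positivity
      rw [eq_comm, mul_comm, ← eq_div_iff h3q, ← hy]
      simp [eq_comm]
    exact_mod_cast h2
  have hφpos : 0 < Nat.totient k := Nat.totient_pos.2 hkpos
  by_cases hpp : IsPrimePow k
  · obtain ⟨p, e, hp, he, hk'⟩ := hpp
    haveI : Fact (Nat.Prime p) := ⟨Nat.prime_iff.2 hp⟩
    obtain ⟨f, rfl⟩ : ∃ f, e = f + 1 := ⟨e - 1, by omega⟩
    have hcval : c = (p : ℤ) := by
      rw [hc, ← hk', eval_one_cyclotomic_prime_pow]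
    have h3p : (3:ℤ) ∣ (p:ℤ) := by
      calc (3:ℤ) ∣ 3 ^ Nat.totient k := dvd_pow_self 3 hφpos.ne'
        _ ∣ c := hdvd
        _ = (p:ℤ) := hcval
    have hp3 : p = 3 := by
      have : (3:ℕ) ∣ p := by exact_mod_cast h3p
      exact ((Nat.prime_dvd_prime_iff_eq Nat.prime_three (Nat.prime_iff.2 hp)).1 this).symm
    have hφ2 : 2 ≤ Nat.totient k := by
      rw [← hk', hp3, Nat.totient_prime_pow Nat.prime_three (Nat.succ_pos f)]
      have h1 : 1 ≤ 3 ^ f := Nat.one_le_pow _ _ (by norm_num)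
      calc 2 = 1 * 2 := by norm_num
        _ ≤ 3 ^ f * (3 - 1) := Nat.mul_le_mul h1 (by norm_num)
    have hle : (3:ℤ) ^ Nat.totient k ≤ 3 := by
      refine Int.le_of_dvd (by norm_num) ?_
      have hc3 : c = (3:ℤ) := by rw [hcval, hp3]; norm_num
      exact hc3 ▸ hdvd
    have hge : (9:ℤ) ≤ 3 ^ Nat.totient k := by
      calc (9:ℤ) = 3 ^ 2 := by norm_num
        _ ≤ 3 ^ Nat.totient k := pow_le_pow_right₀ (by norm_num) hφ2
    linarith
  · have hcval : c = 1 := by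
      rw [hc]
      refine eval_one_cyclotomic_not_prime_pow fun {p} hq j hj => hpp ?_
      have hj' : 0 < j := by
        by_contra h
        have h0 : j = 0 := by omega
        rw [h0, pow_zero] at hj
        omega
      exact ⟨p, j, Nat.prime_iff.1 hq, hj', hj⟩
    have hle : (3:ℤ) ^ Nat.totient k ≤ 1 :=
      Int.le_of_dvd (by norm_num) (hcval ▸ hdvd)
    have hge : (3:ℤ) ≤ 3 ^ Nat.totient k := by
      calc (3:ℤ) = 3 ^ 1 := by norm_num
        _ ≤ 3 ^ Nat.totient k := pow_le_pow_right₀ (by norm_num) hφpos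
    linarith

lemma Stilde_sq : Stilde * Stilde = 1 := by
  rw [Stilde, Matrix.smul_mul, Matrix.mul_smul, smul_smul]
  ext i j
  fin_cases i <;> fin_cases j <;>
    simp [Matrix.mul_apply, Fin.sum_univ_three, Matrix.one_apply] <;> norm_num

lemma trace_SD (d : Fin 3 → ℂ) :
    (Stilde * Matrix.diagonal d).trace = (d 0 - 2 * d 1 - 2 * d 2) / 3 := by
  simp [Matrix.trace, Matrix.diag, Matrix.mul_diagonal, Stilde, Fin.sum_univ_three]
  ring

lemma trace_DS (e : Fin 3 → ℂ) :
    (Matrix.diagonal e * Stilde).trace = (e 0 - 2 * e 1 - 2 * e 2) / 3 := by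
  simp [Matrix.trace, Matrix.diag, Matrix.diagonal_mul, Stilde, Fin.sum_univ_three]
  ring

lemma omega_pow_three : ω ^ 3 = 1 := by
  rw [ω, ← Complex.exp_nat_mul]
  norm_num
  rw [show (3:ℂ) * (2 * Real.pi * Complex.I / 3) = 2 * Real.pi * Complex.I by ring]
  exact Complex.exp_two_pi_mul_I

lemma omega_ne_one : ω ≠ 1 := by
  rw [ω]
  intro hone
  obtain ⟨n, hn⟩ := Complex.exp_eq_one_iff.1 hone
  have hI : (Complex.I : ℂ) ≠ 0 := Complex.I_ne_zero
  have hπ : ((Real.pi : ℂ)) ≠ 0 := Complex.ofReal_ne_zero.2 Real.pi_ne_zero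
  have h2 : (2:ℂ) * Real.pi * Complex.I ≠ 0 := by
    intro h; rcases mul_eq_zero.1 h with h | h
    · rcases mul_eq_zero.1 h with h | h
      · norm_num at h
      · exact hπ h
    · exact hI h
  have h3 : (3:ℂ) * n = 1 := by
    have : (2 * Real.pi * Complex.I) * (1 - 3 * n) = 0 := by
      linear_combination (3 : ℂ) * hn
    rcases mul_eq_zero.1 this with h | h
    · exact absurd h h2
    · linear_combination -h
  have h4 : ((3 * n : ℤ) : ℂ) = ((1 : ℤ) : ℂ) := by push_cast; linear_combination h3
  have h5 : (3 * n : ℤ) = 1 := by exact_mod_cast h4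
  omega

lemma omega_sum : 1 + ω + ω ^ 2 = 0 := by
  have h := omega_pow_three
  have hf : (ω - 1) * (ω ^ 2 + ω + 1) = 0 := by linear_combination h
  rcases mul_eq_zero.1 hf with h1 | h2
  · exact absurd (by linear_combination h1) omega_ne_one
  · linear_combination h2

/-- If `T̃ = diag(d₀,d₁,d₂)` has roots of unity on the diagonal,
not all equal, and `S̃·T̃` has finite order, then `(d₀,d₁,d₂) = (η, ηω, ηω²)` or
`(η, ηω², ηω)` for some root of unity `η`. -/
theorem stmt7 (d : Fin 3 → ℂ)
    (hd : ∀ i, ∃ n : ℕ, 0 < n ∧ d i ^ n = 1)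
    (hne : ¬(d 0 = d 1 ∧ d 1 = d 2))
    (hfin : ∃ n : ℕ, 1 ≤ n ∧ (Stilde * Matrix.diagonal d) ^ n = 1) :
    ∃ η : ℂ, (∃ n : ℕ, 0 < n ∧ η ^ n = 1) ∧
      ((d 0 = η ∧ d 1 = η * ω ∧ d 2 = η * ω ^ 2) ∨
       (d 0 = η ∧ d 1 = η * ω ^ 2 ∧ d 2 = η * ω)) := by
  obtain ⟨n, hn1, hMn⟩ := hfin
  set M := Stilde * Matrix.diagonal d with hM
  -- d i are nonzero units
  have hdne : ∀ i, d i ≠ 0 := by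
    intro i h0
    obtain ⟨m, hm, hdm⟩ := hd i
    rw [h0, zero_pow hm.ne'] at hdm
    exact zero_ne_one hdm
  have hdinv : ∀ i, d i * (d i)⁻¹ = 1 := fun i => mul_inv_cancel₀ (hdne i)
  have hdinv_ru : ∀ i, ∃ m : ℕ, 0 < m ∧ ((d i)⁻¹) ^ m = 1 := by
    intro i
    obtain ⟨m, hm, hdm⟩ := hd i
    exact ⟨m, hm, by rw [inv_pow, hdm, inv_one]⟩
  -- trace of M is an algebraic integer
  have htM : IsIntegral ℤ M.trace := trace_integral hn1 hMn
  -- the inverse of M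
  set e : Fin 3 → ℂ := fun i => (d i)⁻¹ with he
  have hMC : M * (Matrix.diagonal e * Stilde) = 1 := by
    rw [hM, Matrix.mul_assoc, ← Matrix.mul_assoc (Matrix.diagonal d),
      Matrix.diagonal_mul_diagonal]
    have hde : (fun i => d i * e i) = fun _ => (1:ℂ) := by
      funext i; exact hdinv i
    rw [hde, Matrix.diagonal_one, Matrix.one_mul, Stilde_sq]
  have hpowinv : M ^ (n - 1) = Matrix.diagonal e * Stilde := by
    have h1 : M ^ (n - 1) * M = 1 := by
      rw [← pow_succ, show n - 1 + 1 = n by omega, hMn]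
    calc M ^ (n - 1) = M ^ (n - 1) * (M * (Matrix.diagonal e * Stilde)) := by
          rw [hMC, mul_one]
      _ = (M ^ (n - 1) * M) * (Matrix.diagonal e * Stilde) := (mul_assoc _ _ _).symm
      _ = Matrix.diagonal e * Stilde := by rw [h1, one_mul]
  have hsM : IsIntegral ℤ (Matrix.diagonal e * Stilde).trace := by
    rw [← hpowinv]
    refine trace_integral hn1 ?_
    rw [← pow_mul, mul_comm, pow_mul, hMn, one_pow]
  -- the two trace congruences
  have h1 : d 0 - 2 * d 1 - 2 * d 2 = 3 * M.trace := by
    rw [hM, trace_SD]; ring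
  have h2 : e 0 - 2 * e 1 - 2 * e 2 = 3 * (Matrix.diagonal e * Stilde).trace := by
    rw [trace_DS]; ring
  -- a, b
  set a : ℂ := d 1 * (d 0)⁻¹ with ha
  set b : ℂ := d 2 * (d 0)⁻¹ with hb
  have hdint : ∀ i, IsIntegral ℤ (d i) := by
    intro i; obtain ⟨m, hm, hdm⟩ := hd i; exact ru_integral hm hdm
  have heint : ∀ i, IsIntegral ℤ (e i) := by
    intro i; obtain ⟨m, hm, hdm⟩ := hdinv_ru i; exact ru_integral hm hdm
  set y : ℂ := (d 0)⁻¹ * (M.trace + d 1 + d 2) with hy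
  have hyint : IsIntegral ℤ y :=
    (heint 0).mul ((htM.add (hdint 1)).add (hdint 2))
  have h1a : 1 + a + b = 3 * y := by
    rw [ha, hb, hy]
    linear_combination (d 0)⁻¹ * h1 - hdinv 0
  set y₂ : ℂ := ((Matrix.diagonal e * Stilde).trace + e 1 + e 2) * d 1 * d 2 * (d 0)⁻¹
    with hy₂
  have hy₂int : IsIntegral ℤ y₂ :=
    (((hsM.add (heint 1)).add (heint 2)).mul (hdint 1)).mul (hdint 2) |>.mul (heint 0)
  have h2a : a * b + a + b = 3 * y₂ := by
    rw [ha, hb, hy₂]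
    simp only [he] at h2 ⊢
    linear_combination (d 1 * d 2 * (d 0)⁻¹) * h2 - (d 2 * (d 0)⁻¹) * hdinv 1
      - (d 1 * (d 0)⁻¹) * hdinv 2
  -- a*b is a root of unity congruent to 1 mod 3, hence = 1
  have haru : ∃ m : ℕ, 0 < m ∧ a ^ m = 1 := by
    obtain ⟨m1, hm1, h1'⟩ := hd 1
    obtain ⟨m0, hm0, h0'⟩ := hdinv_ru 0
    refine ⟨m1 * m0, Nat.mul_pos hm1 hm0, ?_⟩
    rw [ha, mul_pow, pow_mul, h1', one_pow, one_mul, mul_comm m1 m0, pow_mul, h0', one_pow]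
  have hbru : ∃ m : ℕ, 0 < m ∧ b ^ m = 1 := by
    obtain ⟨m1, hm1, h1'⟩ := hd 2
    obtain ⟨m0, hm0, h0'⟩ := hdinv_ru 0
    refine ⟨m1 * m0, Nat.mul_pos hm1 hm0, ?_⟩
    rw [hb, mul_pow, pow_mul, h1', one_pow, one_mul, mul_comm m1 m0, pow_mul, h0', one_pow]
  have habru : ∃ m : ℕ, 0 < m ∧ (a * b) ^ m = 1 := by
    obtain ⟨ma, hma, ha'⟩ := haru
    obtain ⟨mb, hmb, hb'⟩ := hbru
    refine ⟨ma * mb, Nat.mul_pos hma hmb, ?_⟩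
    rw [mul_pow, pow_mul, ha', one_pow, one_mul, mul_comm ma mb, pow_mul, hb', one_pow]
  have hab1 : a * b = 1 :=
    ru_cong_one habru ⟨y₂ - y, hy₂int.sub hyint, by linear_combination h2a - h1a⟩
  have haint : IsIntegral ℤ a := (hdint 1).mul (heint 0)
  have ha3 : a ^ 3 = 1 := by
    refine ru_cong_one ?_ ⟨(a - 1) * a * y,
      ((haint.sub isIntegral_one).mul haint).mul hyint,
      by linear_combination (a - 1) * a * h1a + (1 - a) * hab1⟩
    obtain ⟨m, hm, ham⟩ := haru
    exact ⟨m, hm, by rw [← pow_mul, mul_comm, pow_mul, ham, one_pow]⟩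
  have had0 : a * d 0 = d 1 := by
    rw [ha, mul_assoc, inv_mul_cancel₀ (hdne 0), mul_one]
  have hbd0 : b * d 0 = d 2 := by
    rw [hb, mul_assoc, inv_mul_cancel₀ (hdne 0), mul_one]
  by_cases hA1 : a = 1
  · exfalso
    have hb1 : b = 1 := by rw [hA1, one_mul] at hab1; exact hab1
    rw [hA1, one_mul] at had0
    rw [hb1, one_mul] at hbd0
    exact hne ⟨had0, had0.symm.trans hbd0⟩
  · have haa : a ^ 2 + a + 1 = 0 := by
      have hf : (a - 1) * (a ^ 2 + a + 1) = 0 := by linear_combination ha3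
      rcases mul_eq_zero.1 hf with h | h
      · exact absurd (by linear_combination h) hA1
      · exact h
    have hωω : (a - ω) * (a - ω ^ 2) = 0 := by
      linear_combination haa - a * omega_sum + omega_pow_three
    have hωne : ω ≠ 0 := by
      intro h
      have h3 := omega_pow_three
      rw [h] at h3
      norm_num at h3
    refine ⟨d 0, hd 0, ?_⟩
    rcases mul_eq_zero.1 hωω with h | h
    · have haω : a = ω := by linear_combination h
      have hbω : b = ω ^ 2 := by
        have h1' : ω * b = 1 := by rw [← haω]; exact hab1
        have h2' : ω * ω ^ 2 = 1 := by linear_combination omega_pow_three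
        exact mul_left_cancel₀ hωne (h1'.trans h2'.symm)
      exact Or.inl ⟨rfl, by rw [← had0, haω, mul_comm], by rw [← hbd0, hbω, mul_comm]⟩
    · have haω : a = ω ^ 2 := by linear_combination h
      have hbω : b = ω := by
        have h1' : ω ^ 2 * b = 1 := by rw [← haω]; exact hab1
        have h2' : ω ^ 2 * ω = 1 := by linear_combination omega_pow_three
        exact mul_left_cancel₀ (pow_ne_zero 2 hωne) (h1'.trans h2'.symm)
      exact Or.inr ⟨rfl, by rw [← had0, haω, mul_comm], by rw [← hbd0, hbω, mul_comm]⟩
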